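/- There is an absolute constant c > 0 such that for all integers n ≥ 1 and d ≥ 0 there exists a univariate polynomial p of degree at most d with p(n) = 1, |p(t)| ≤ exp(−c·d²/n) for t = 0, 1, …, n−1, and |p(t)| ≤ 1 for all t ∈ [0, n]. -/

import Mathlib

open Real Polynomial Polynomial.Chebyshev

noncomputable def acosh (x : ℝ) : ℝ := Real.log (x + Real.sqrt (x ^ 2 - 1))

lemma acosh_nonneg {x : ℝ} (hx : 1 ≤ x) : 0 ≤ acosh x :=
  Real.log_nonneg (by nlinarith [Real.sqrt_nonneg (x ^ 2 - 1)])

lemma cosh_acosh {x : ℝ} (hx : 1 ≤ x) : Real.cosh (acosh x) = x := by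
  have h1 : (0:ℝ) ≤ x ^ 2 - 1 := by nlinarith
  have hs : Real.sqrt (x ^ 2 - 1) ^ 2 = x ^ 2 - 1 := Real.sq_sqrt h1
  have hsn := Real.sqrt_nonneg (x ^ 2 - 1)
  have hy : 0 < x + Real.sqrt (x ^ 2 - 1) := by nlinarith
  rw [acosh, Real.cosh_eq, Real.exp_log hy, Real.exp_neg, Real.exp_log hy]
  field_simp
  nlinarith [hs]

lemma acosh_le_acosh {x y : ℝ} (hx : 1 ≤ x) (hxy : x ≤ y) : acosh x ≤ acosh y := by
  have h1 : (0:ℝ) < x + Real.sqrt (x ^ 2 - 1) := by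
    nlinarith [Real.sqrt_nonneg (x ^ 2 - 1)]
  apply Real.log_le_log h1
  gcongr <;> nlinarith

lemma sqrt_le_acosh {ε : ℝ} (h0 : 0 ≤ ε) (h1 : ε ≤ 1) : Real.sqrt ε ≤ acosh (1 + ε) := by
  set z := Real.sqrt ε with hz
  have hz2 : z ^ 2 = ε := Real.sq_sqrt h0
  have hz0 : 0 ≤ z := Real.sqrt_nonneg _
  have hz1 : z ≤ 1 := by
    rw [hz, show (1:ℝ) = Real.sqrt 1 by simp]
    exact Real.sqrt_le_sqrt h1
  have hexp : Real.exp z ≤ 1 + z + z ^ 2 := by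
    have hb := Real.exp_bound (x := z) (by rwa [abs_of_nonneg hz0]) (n := 2) (by norm_num)
    simp only [Finset.sum_range_succ, Finset.sum_range_zero, abs_of_nonneg hz0] at hb
    have := (abs_le.1 hb).2
    norm_num at this
    nlinarith
  have hsq2 : (0:ℝ) ≤ (1 + ε) ^ 2 - 1 := by nlinarith
  have hss : Real.sqrt ((1 + ε) ^ 2 - 1) ^ 2 = (1 + ε) ^ 2 - 1 := Real.sq_sqrt hsq2
  have hssn := Real.sqrt_nonneg ((1 + ε) ^ 2 - 1)
  have hge : z * Real.sqrt 2 ≤ Real.sqrt ((1 + ε) ^ 2 - 1) := by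
    rw [show z * Real.sqrt 2 = Real.sqrt (ε * 2) by rw [Real.sqrt_mul h0]]
    apply Real.sqrt_le_sqrt
    nlinarith
  have h2 : (1.4:ℝ) ≤ Real.sqrt 2 := by
    nlinarith [Real.sq_sqrt (show (0:ℝ) ≤ 2 by norm_num), Real.sqrt_nonneg 2]
  rw [acosh, Real.le_log_iff_exp_le (by nlinarith)]
  nlinarith

lemma one_add_sq_div_two_le_cosh {w : ℝ} : 1 + w ^ 2 / 2 ≤ Real.cosh w := by
  have h1 : Real.cosh w = Real.cosh (2 * (w / 2)) := by ring_nf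
  have h2 : Real.cosh (2 * (w / 2)) = Real.cosh (w/2) ^ 2 + Real.sinh (w/2) ^ 2 :=
    Real.cosh_two_mul _
  have h3 : Real.cosh (w/2) ^ 2 = Real.sinh (w/2) ^ 2 + 1 := Real.cosh_sq _
  have h4 : (w/2) ^ 2 ≤ Real.sinh (w/2) ^ 2 := by
    rcases le_or_gt 0 (w/2) with h | h
    · rcases eq_or_lt_of_le h with h' | h'
      · rw [← h']; simp
      · nlinarith [(Real.self_lt_sinh_iff.2 h').le]
    · have h' : 0 < -(w/2) := by linarith
      have := (Real.self_lt_sinh_iff.2 h').le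
      rw [Real.sinh_neg] at this
      nlinarith
  nlinarith

lemma half_exp_le_cosh (x : ℝ) : Real.exp x / 2 ≤ Real.cosh x := by
  rw [Real.cosh_eq]
  have := Real.exp_pos (-x)
  linarith

lemma exp_le_one_add_two {x : ℝ} (h0 : 0 ≤ x) (h1 : x ≤ 1) : Real.exp x ≤ 1 + 2 * x := by
  have h := convexOn_exp.2 (Set.mem_univ (0:ℝ)) (Set.mem_univ (1:ℝ))
    (by linarith : (0:ℝ) ≤ 1 - x) h0 (by ring)
  simp only [smul_eq_mul, mul_zero, mul_one, zero_add, Real.exp_zero] at h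
  have he := Real.exp_one_lt_d9
  nlinarith [h]

lemma exp_sq_le_cosh {w : ℝ} (h0 : 0 ≤ w) (h16 : w ≤ 16) :
    Real.exp (w ^ 2 / 250) ≤ Real.cosh w := by
  rcases le_or_gt w 2 with h | h
  · have h1 : Real.exp (w ^ 2 / 250) ≤ Real.exp (w ^ 2 / 4) := by
      apply Real.exp_le_exp.2; nlinarith
    have h2 : Real.exp (w ^ 2 / 4) ≤ 1 + 2 * (w ^ 2 / 4) :=
      exp_le_one_add_two (by positivity) (by nlinarith)
    have h3 := one_add_sq_div_two_le_cosh (w := w)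
    nlinarith
  · have h1 : Real.exp (w ^ 2 / 250) ≤ Real.exp (w - 1) := by
      apply Real.exp_le_exp.2; nlinarith
    have h2 : Real.exp (w - 1) ≤ Real.exp w / 2 := by
      rw [Real.exp_sub]
      have he : (2:ℝ) ≤ Real.exp 1 := by
        have := Real.add_one_le_exp (1:ℝ); linarith
      have := Real.exp_pos w
      have he0 := Real.exp_pos (1:ℝ)
      rw [div_le_div_iff₀ he0 (by norm_num)]
      nlinarith
    linarith [half_exp_le_cosh w]

open Real Polynomial Polynomial.Chebyshev

lemma T_cosh (k : ℕ) (t : ℝ) :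
    (T ℝ k).eval (Real.cosh t) = Real.cosh (k * t) := by
  induction k using Nat.twoStepInduction with
  | zero => simp [T_zero]
  | one => simp [T_one]
  | more k ih1 ih2 =>
    have hcast : ((k + 2 : ℕ) : ℤ) = (k : ℤ) + 2 := by push_cast; ring
    rw [hcast, T_add_two]
    simp only [eval_sub, eval_mul, eval_X, eval_ofNat]
    rw [show ((k:ℤ) + 1) = ((k+1:ℕ) : ℤ) by push_cast; ring]
    rw [ih2, ih1]
    have key : Real.cosh (((k:ℝ)+2)*t) + Real.cosh ((k:ℝ)*t)
        = 2 * Real.cosh (((k:ℝ)+1)*t) * Real.cosh t := by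
      rw [show ((k:ℝ)+2)*t = ((k:ℝ)+1)*t + t by ring,
          show ((k:ℝ))*t = ((k:ℝ)+1)*t - t by ring,
          Real.cosh_add, Real.cosh_sub]
      ring
    push_cast
    push_cast at key
    linarith [key]

lemma abs_T_le_one (k : ℕ) {x : ℝ} (hx : |x| ≤ 1) : |(T ℝ k).eval x| ≤ 1 := by
  obtain ⟨h1, h2⟩ := abs_le.1 hx
  have : Real.cos (Real.arccos x) = x := Real.cos_arccos h1 h2
  rw [← this, T_real_cos]
  exact Real.abs_cos_le_one _

lemma one_le_T (k : ℕ) {x : ℝ} (hx : 1 ≤ x) : 1 ≤ (T ℝ k).eval x := by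
  rw [← cosh_acosh hx, T_cosh]
  exact Real.one_le_cosh _

lemma T_mono (k : ℕ) {x y : ℝ} (hx : 1 ≤ x) (hxy : x ≤ y) :
    (T ℝ k).eval x ≤ (T ℝ k).eval y := by
  rw [← cosh_acosh hx, ← cosh_acosh (hx.trans hxy), T_cosh, T_cosh]
  rw [Real.cosh_le_cosh,
    abs_of_nonneg (mul_nonneg (Nat.cast_nonneg k) (acosh_nonneg hx)),
    abs_of_nonneg (mul_nonneg (Nat.cast_nonneg k) (acosh_nonneg (hx.trans hxy)))]
  exact mul_le_mul_of_nonneg_left (acosh_le_acosh hx hxy) (Nat.cast_nonneg k)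

lemma T_lower (k : ℕ) {ε : ℝ} (h0 : 0 ≤ ε) (h1 : ε ≤ 1) :
    Real.cosh (k * Real.sqrt ε) ≤ (T ℝ k).eval (1 + ε) := by
  rw [← cosh_acosh (by linarith : (1:ℝ) ≤ 1 + ε), T_cosh, Real.cosh_le_cosh,
    abs_of_nonneg (mul_nonneg (Nat.cast_nonneg k) (Real.sqrt_nonneg ε)),
    abs_of_nonneg (mul_nonneg (Nat.cast_nonneg k) (acosh_nonneg (by linarith)))]
  exact mul_le_mul_of_nonneg_left (sqrt_le_acosh h0 h1) (Nat.cast_nonneg k)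

lemma natDegree_T_le (k : ℕ) : (T ℝ k).natDegree ≤ k := by
  induction k using Nat.twoStepInduction with
  | zero => simp [T_zero]
  | one => simp [T_one]
  | more k ih1 ih2 =>
    have hcast : ((k + 2 : ℕ) : ℤ) = (k : ℤ) + 2 := by push_cast; ring
    rw [hcast, T_add_two]
    apply le_trans (natDegree_sub_le _ _)
    rw [show ((k:ℤ) + 1) = ((k+1:ℕ) : ℤ) by push_cast; ring]
    apply max_le
    · refine le_trans (natDegree_mul_le) ?_
      have hX : ((2 : ℝ[X]) * X).natDegree ≤ 1 :=
        le_trans natDegree_mul_le (by simp)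
      omega
    · omega

open Real Polynomial Polynomial.Chebyshev

noncomputable def cheb (k : ℕ) (b N : ℝ) : Polynomial ℝ :=
  Polynomial.C (((T ℝ k).eval (N / b))⁻¹) * (T ℝ k).comp (Polynomial.C b⁻¹ * Polynomial.X)

lemma cheb_eval (k : ℕ) (b N x : ℝ) :
    (cheb k b N).eval x = ((T ℝ k).eval (N / b))⁻¹ * (T ℝ k).eval (x / b) := by
  simp only [cheb, eval_mul, eval_C, eval_comp, eval_X]
  rw [show b⁻¹ * x = x / b by ring]

lemma cheb_natDegree_le (k : ℕ) (b N : ℝ) : (cheb k b N).natDegree ≤ k := by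
  refine le_trans (natDegree_C_mul_le _ _) (le_trans natDegree_comp_le ?_)
  have h1 : (Polynomial.C b⁻¹ * Polynomial.X : ℝ[X]).natDegree ≤ 1 :=
    le_trans (natDegree_C_mul_le _ _) natDegree_X_le
  calc (T ℝ k).natDegree * (Polynomial.C b⁻¹ * Polynomial.X : ℝ[X]).natDegree
      ≤ k * 1 := Nat.mul_le_mul (natDegree_T_le k) h1
    _ = k := mul_one k

section ChebProps

variable {k : ℕ} {b N : ℝ} (hb : 0 < b) (hbN : b ≤ N)

lemma cheb_den_ge (hb : 0 < b) (hbN : b ≤ N) : 1 ≤ (T ℝ k).eval (N / b) :=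
  one_le_T k ((one_le_div hb).2 hbN)

lemma cheb_eval_N (hb : 0 < b) (hbN : b ≤ N) : (cheb k b N).eval N = 1 := by
  rw [cheb_eval]
  exact inv_mul_cancel₀ (by linarith [cheb_den_ge (k := k) hb hbN])

lemma cheb_abs_le_inv_den (hb : 0 < b) (hbN : b ≤ N) {x : ℝ} (hx : |x| ≤ b) :
    |(cheb k b N).eval x| ≤ ((T ℝ k).eval (N / b))⁻¹ := by
  have hden := cheb_den_ge (k := k) hb hbN
  rw [cheb_eval, abs_mul, abs_inv, abs_of_nonneg (by linarith)]
  have h1 : |(T ℝ k).eval (x / b)| ≤ 1 := by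
    apply abs_T_le_one
    rw [abs_div, abs_of_pos hb, div_le_one hb]
    exact hx
  calc ((T ℝ k).eval (N / b))⁻¹ * |(T ℝ k).eval (x / b)|
      ≤ ((T ℝ k).eval (N / b))⁻¹ * 1 := by
        apply mul_le_mul_of_nonneg_left h1 (by positivity)
    _ = _ := mul_one _

lemma cheb_abs_le_one (hb : 0 < b) (hbN : b ≤ N) {x : ℝ} (hx0 : 0 ≤ x) (hxN : x ≤ N) :
    |(cheb k b N).eval x| ≤ 1 := by
  have hden := cheb_den_ge (k := k) hb hbN
  rcases le_or_gt x b with h | h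
  · refine le_trans (cheb_abs_le_inv_den hb hbN (by rwa [abs_of_nonneg hx0])) ?_
    exact inv_le_one_of_one_le₀ hden
  · have h1 : 1 ≤ (T ℝ k).eval (x / b) := one_le_T k (by rw [le_div_iff₀ hb]; linarith)
    have h2 : (T ℝ k).eval (x / b) ≤ (T ℝ k).eval (N / b) :=
      T_mono k (by rw [le_div_iff₀ hb]; linarith) (by gcongr)
    rw [cheb_eval, abs_mul, abs_inv, abs_of_nonneg (by linarith),
      abs_of_nonneg (by linarith : (0:ℝ) ≤ (T ℝ k).eval (x / b))]
    calc ((T ℝ k).eval (N / b))⁻¹ * (T ℝ k).eval (x / b)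
        ≤ ((T ℝ k).eval (N / b))⁻¹ * (T ℝ k).eval (N / b) :=
          mul_le_mul_of_nonneg_left h2 (inv_nonneg.2 (by linarith))
      _ = 1 := inv_mul_cancel₀ (by linarith)

end ChebProps

open Real Polynomial Polynomial.Chebyshev

lemma cheb_zero {k : ℕ} (hk : k ≠ 0) {b : ℝ} (hb : b ≠ 0) (N : ℝ) :
    (cheb k b N).eval (b * Real.cos (Real.pi / (2 * k))) = 0 := by
  rw [cheb_eval]
  have h1 : b * Real.cos (Real.pi / (2 * k)) / b = Real.cos (Real.pi / (2 * k)) := by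
    field_simp
  rw [h1, T_real_cos]
  have hk' : (k : ℝ) ≠ 0 := Nat.cast_ne_zero.2 hk
  have h2 : ((k : ℤ) : ℝ) * (Real.pi / (2 * k)) = Real.pi / 2 := by
    push_cast
    field_simp
  rw [h2, Real.cos_pi_div_two, mul_zero]

/-- degree budget for the factor killing `n - j`. -/
noncomputable def Kdeg (n j : ℕ) : ℕ := ⌈2 * Real.sqrt ((n : ℝ) / j)⌉₊

lemma sum_inv_sqrt (m : ℕ) :
    ∑ j ∈ Finset.Icc 1 m, (1 / Real.sqrt j) ≤ 2 * Real.sqrt m := by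
  induction m with
  | zero => simp
  | succ m ih =>
    rw [← Nat.succ_eq_add_one, Finset.sum_Icc_succ_top (by omega)]
    have ha2 : Real.sqrt m ^ 2 = m := Real.sq_sqrt (Nat.cast_nonneg m)
    have hb2 : Real.sqrt (m + 1 : ℕ) ^ 2 = (m + 1 : ℕ) := Real.sq_sqrt (Nat.cast_nonneg _)
    have ha0 : 0 ≤ Real.sqrt m := Real.sqrt_nonneg _
    have hb0 : 0 < Real.sqrt (m + 1 : ℕ) := Real.sqrt_pos.2 (by positivity)
    have key : 1 / Real.sqrt (m + 1 : ℕ) ≤ 2 * Real.sqrt (m + 1 : ℕ) - 2 * Real.sqrt m := by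
      rw [div_le_iff₀ hb0]
      have hcast : ((m + 1 : ℕ) : ℝ) = (m : ℝ) + 1 := by push_cast; ring
      nlinarith [sq_nonneg (Real.sqrt (m + 1 : ℕ) - Real.sqrt m)]
    have := Nat.succ_eq_add_one m
    calc (∑ j ∈ Finset.Icc 1 m, (1 / Real.sqrt j)) + 1 / Real.sqrt (m + 1 : ℕ)
        ≤ 2 * Real.sqrt m + (2 * Real.sqrt (m + 1 : ℕ) - 2 * Real.sqrt m) :=
          add_le_add ih key
      _ = 2 * Real.sqrt (m + 1 : ℕ) := by ring

lemma sum_Kdeg_le (n m : ℕ) (hn : 1 ≤ n) :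
    (∑ j ∈ Finset.Icc 1 m, (Kdeg n j : ℝ)) ≤ m + 4 * Real.sqrt ((n : ℝ) * m) := by
  have h1 : ∀ j ∈ Finset.Icc 1 m, (Kdeg n j : ℝ) ≤ 2 * Real.sqrt n * (1 / Real.sqrt j) + 1 := by
    intro j hj
    obtain ⟨hj1, hj2⟩ := Finset.mem_Icc.1 hj
    have hjpos : (0:ℝ) < j := by exact_mod_cast hj1
    have : (Kdeg n j : ℝ) < 2 * Real.sqrt ((n : ℝ) / j) + 1 :=
      Nat.ceil_lt_add_one (by positivity)
    have hsq : Real.sqrt ((n:ℝ)/j) = Real.sqrt n * (1 / Real.sqrt j) := by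
      rw [Real.sqrt_div (Nat.cast_nonneg n)]; ring
    rw [hsq] at this
    linarith
  calc (∑ j ∈ Finset.Icc 1 m, (Kdeg n j : ℝ))
      ≤ ∑ j ∈ Finset.Icc 1 m, (2 * Real.sqrt n * (1 / Real.sqrt j) + 1) :=
        Finset.sum_le_sum h1
    _ = 2 * Real.sqrt n * (∑ j ∈ Finset.Icc 1 m, (1 / Real.sqrt j)) + m := by
        rw [Finset.sum_add_distrib, ← Finset.mul_sum]
        simp [Nat.card_Icc]
    _ ≤ 2 * Real.sqrt n * (2 * Real.sqrt m) + m := by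
        have h2 := sum_inv_sqrt m
        have h3 : (0:ℝ) ≤ 2 * Real.sqrt n := by positivity
        nlinarith [Real.sqrt_nonneg (n:ℝ)]
    _ = m + 4 * Real.sqrt ((n : ℝ) * m) := by
        rw [Real.sqrt_mul (Nat.cast_nonneg n)]
        ring

open Real Polynomial Polynomial.Chebyshev

set_option maxHeartbeats 2000000 in
lemma factor_props (n j : ℕ) (hn : 2 ≤ n) (hj1 : 1 ≤ j) (hjn : j ≤ n - 1) :
    ∃ b : ℝ, 0 < b ∧ b ≤ n ∧
      (cheb (Kdeg n j) b n).eval ((n - j : ℕ) : ℝ) = 0 := by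
  obtain ⟨k, hkdef⟩ : ∃ k : ℕ, Kdeg n j = k := ⟨_, rfl⟩
  rw [hkdef]
  have hj0 : (0:ℝ) < j := by exact_mod_cast hj1
  have hn0 : (0:ℝ) < n := by positivity
  have hjn' : (j:ℝ) ≤ (n:ℝ) - 1 := by
    have : (j:ℝ) ≤ ((n - 1 : ℕ) : ℝ) := by exact_mod_cast hjn
    rwa [Nat.cast_sub (by omega), Nat.cast_one] at this
  have hnj : (1:ℝ) ≤ (n:ℝ) / j := (one_le_div hj0).2 (by linarith)
  have hsq1 : (1:ℝ) ≤ Real.sqrt ((n:ℝ)/j) := by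
    rw [show (1:ℝ) = Real.sqrt 1 by simp]
    exact Real.sqrt_le_sqrt hnj
  have hk2 : 2 ≤ k := by
    rw [← hkdef]
    have h := Nat.ceil_le_ceil (R := ℝ) (show (2:ℝ) ≤ 2 * Real.sqrt ((n:ℝ)/j) by linarith)
    simpa [Kdeg] using h
  have hkR : (2:ℝ) * Real.sqrt ((n:ℝ)/j) ≤ (k:ℝ) := by
    rw [← hkdef]; exact Nat.le_ceil _
  have hkR0 : (0:ℝ) < k := by
    have : (0:ℕ) < k := by omega
    exact_mod_cast this
  have hkR2 : 4 * ((n:ℝ)/j) ≤ (k:ℝ)^2 := by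
    have hs := Real.sq_sqrt (show (0:ℝ) ≤ (n:ℝ)/j by positivity)
    nlinarith [Real.sqrt_nonneg ((n:ℝ)/j)]
  obtain ⟨θ, hθdef⟩ : ∃ θ : ℝ, θ = Real.pi / (2 * (k:ℝ)) := ⟨_, rfl⟩
  have hpi4 := Real.pi_le_four
  have hpi0 := Real.pi_pos
  have hθ0 : 0 < θ := by rw [hθdef]; positivity
  have hθ1 : θ ≤ 1 := by
    rw [hθdef, div_le_one (by positivity)]
    have : (2:ℝ) ≤ k := by exact_mod_cast hk2
    nlinarith
  have hcosθ : 1/2 ≤ Real.cos θ := by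
    have := Real.one_sub_sq_div_two_le_cos (x := θ)
    nlinarith
  have hcos0 : (0:ℝ) < Real.cos θ := by linarith
  -- θ^2 * n ≤ j
  have hkj : 4 * (n:ℝ) ≤ (k:ℝ)^2 * j := by
    have h1 := mul_le_mul_of_nonneg_right hkR2 hj0.le
    have h2 : (n:ℝ)/j*j = n := div_mul_cancel₀ _ (ne_of_gt hj0)
    nlinarith
  have h16 : Real.pi^2 ≤ 16 := by nlinarith
  have hθ2n : θ^2 * n ≤ j := by
    have hk2pos : (0:ℝ) < 4 * (k:ℝ)^2 := by positivity
    have hform : θ^2 = Real.pi^2 / (4 * (k:ℝ)^2) := by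
      rw [hθdef, div_pow]
      congr 1
      ring
    rw [hform, div_mul_eq_mul_div, div_le_iff₀ hk2pos]
    nlinarith [mul_le_mul_of_nonneg_right h16 hn0.le]
  refine ⟨((n:ℝ) - j) / Real.cos θ, div_pos (by linarith) hcos0, ?_, ?_⟩
  · rw [div_le_iff₀ hcos0]
    nlinarith [mul_le_mul_of_nonneg_right (Real.one_sub_sq_div_two_le_cos (x := θ)) hn0.le]
  · have hb0 : ((n:ℝ) - j) / Real.cos θ ≠ 0 := ne_of_gt (div_pos (by linarith) hcos0)
    have hz := cheb_zero (k := k) (by omega) hb0 (n:ℝ)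
    have harg : ((n:ℝ) - j) / Real.cos θ * Real.cos (Real.pi / (2 * k)) = ((n - j : ℕ) : ℝ) := by
      rw [← hθdef, div_mul_cancel₀ _ (ne_of_gt hcos0), Nat.cast_sub (by omega)]
    rwa [harg] at hz

lemma prod_factors (n ℓ : ℕ) (hn : 2 ≤ n) (hℓn : ℓ ≤ n) :
    ∃ q : Polynomial ℝ,
      q.natDegree ≤ ∑ j ∈ Finset.Icc 1 (ℓ - 1), Kdeg n j ∧
      q.eval (n : ℝ) = 1 ∧
      (∀ t : ℕ, n - ℓ < t → t < n → q.eval (t : ℝ) = 0) ∧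
      (∀ x ∈ Set.Icc (0:ℝ) (n:ℝ), |q.eval x| ≤ 1) := by
  have hfac : ∀ j ∈ Finset.Icc 1 (ℓ - 1), ∃ b : ℝ, 0 < b ∧ b ≤ n ∧
      (cheb (Kdeg n j) b n).eval ((n - j : ℕ) : ℝ) = 0 := by
    intro j hj
    obtain ⟨hj1, hj2⟩ := Finset.mem_Icc.1 hj
    exact factor_props n j hn hj1 (by omega)
  choose B hB0 hBn hBzero using hfac
  refine ⟨∏ j ∈ (Finset.Icc 1 (ℓ - 1)).attach, cheb (Kdeg n j.1) (B j.1 j.2) n, ?_, ?_, ?_, ?_⟩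
  · refine le_trans (Polynomial.natDegree_prod_le _ _) ?_
    rw [← Finset.sum_attach (Finset.Icc 1 (ℓ - 1)) (fun j => Kdeg n j)]
    exact Finset.sum_le_sum fun j _ => cheb_natDegree_le _ _ _
  · rw [eval_prod]
    apply Finset.prod_eq_one
    intro j _
    exact cheb_eval_N (hB0 j.1 j.2) (hBn j.1 j.2)
  · intro t ht1 ht2
    rw [eval_prod]
    have hj0mem : (n - t) ∈ Finset.Icc 1 (ℓ - 1) := Finset.mem_Icc.2 (by omega)
    apply Finset.prod_eq_zero (Finset.mem_attach _ ⟨n - t, hj0mem⟩)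
    have : ((n - (n - t) : ℕ) : ℝ) = (t : ℝ) := by
      congr 1
      omega
    rw [← this]
    exact hBzero (n - t) hj0mem
  · intro x hx
    rw [eval_prod, Finset.abs_prod]
    apply Finset.prod_le_one
    · intro j _
      exact abs_nonneg _
    · intro j _
      exact cheb_abs_le_one (hB0 j.1 j.2) (hBn j.1 j.2) hx.1 hx.2

open Real Polynomial Polynomial.Chebyshev

set_option maxHeartbeats 2000000 in
/-- There is a constant `c > 0` such that for all `n ≥ 1` and `d ≥ 0`, there is a univariate
polynomial `p` of degree at most `d` with `p(n) = 1`, `|p(t)| ≤ exp(−c·d²/n)` for each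
integer `t ∈ {0,…,n−1}`, and `|p(t)| ≤ 1` for all real `t ∈ [0,n]`. -/
theorem exists_and_approx_polynomial :
    ∃ c : ℝ, 0 < c ∧ ∀ n : ℕ, 1 ≤ n → ∀ d : ℕ,
      ∃ p : Polynomial ℝ, p.natDegree ≤ d ∧
        p.eval (n : ℝ) = 1 ∧
        (∀ t : ℕ, t < n → |p.eval (t : ℝ)| ≤ Real.exp (-c * d ^ 2 / n)) ∧
        (∀ t ∈ Set.Icc (0 : ℝ) n, |p.eval t| ≤ 1) := by
  refine ⟨1/1000, by norm_num, ?_⟩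
  intro n hn d
  have hn0 : (0:ℝ) < n := by exact_mod_cast hn
  rcases Nat.eq_zero_or_pos d with hd0 | hd1
  · subst hd0
    refine ⟨1, by simp, by simp, ?_, by simp⟩
    intro t _
    simp only [eval_one, abs_one]
    norm_num
  rcases eq_or_lt_of_le hn with hn1 | hn2
  · -- n = 1
    refine ⟨Polynomial.X, le_trans natDegree_X_le hd1, by simp [← hn1], ?_, ?_⟩
    · intro t ht
      have ht0 : t = 0 := by omega
      subst ht0
      simp only [eval_X, Nat.cast_zero, abs_zero]
      positivity
    · intro x hx
      rw [eval_X, abs_of_nonneg hx.1]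
      exact le_trans hx.2 (by rw [← hn1]; norm_num)
  have hn2' : 2 ≤ n := hn2
  have hnR2 : (2:ℝ) ≤ n := by exact_mod_cast hn2'
  have hdR1 : (1:ℝ) ≤ d := by exact_mod_cast hd1
  rcases le_or_gt (6 * n) d with hB | hC
  · -- case B : d ≥ 6n, fully vanishing polynomial
    obtain ⟨q, hqdeg, hqN, hqzero, hqbd⟩ := prod_factors n n hn2' le_rfl
    refine ⟨cheb 1 (n:ℝ) (n:ℝ) * q, ?_, ?_, ?_, ?_⟩
    · refine le_trans natDegree_mul_le ?_
      have h1 := cheb_natDegree_le 1 (n:ℝ) (n:ℝ)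
      have hSR := sum_Kdeg_le n (n-1) hn
      have hsq : Real.sqrt ((n:ℝ) * ((n-1:ℕ):ℝ)) ≤ n := by
        have hle : ((n-1:ℕ):ℝ) ≤ n := by
          have : (n-1:ℕ) ≤ n := by omega
          exact_mod_cast this
        have h1 : (n:ℝ) * ((n-1:ℕ):ℝ) ≤ (n:ℝ)^2 := by nlinarith
        calc Real.sqrt ((n:ℝ) * ((n-1:ℕ):ℝ)) ≤ Real.sqrt ((n:ℝ)^2) := Real.sqrt_le_sqrt h1
          _ = n := Real.sqrt_sq hn0.le
      have hmn1 : ((n-1:ℕ):ℝ) ≤ (n:ℝ) - 1 := by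
        rw [Nat.cast_sub hn]; simp
      have hd6 : (6:ℝ) * n ≤ d := by exact_mod_cast hB
      have hSd : ((∑ j ∈ Finset.Icc 1 (n - 1), Kdeg n j : ℕ) : ℝ) ≤ (d:ℝ) - 1 := by
        push_cast at hSR ⊢
        nlinarith
      have : (cheb 1 (n:ℝ) (n:ℝ)).natDegree + q.natDegree ≤ 1 + (∑ j ∈ Finset.Icc 1 (n - 1), Kdeg n j) :=
        add_le_add h1 hqdeg
      refine le_trans this ?_
      have : ((1 + (∑ j ∈ Finset.Icc 1 (n - 1), Kdeg n j) : ℕ) : ℝ) ≤ (d:ℝ) := by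
        push_cast
        push_cast at hSd
        linarith
      exact_mod_cast this
    · rw [eval_mul, hqN, cheb_eval_N hn0 le_rfl, one_mul]
    · intro t ht
      have hz : (cheb 1 (n:ℝ) (n:ℝ) * q).eval (t:ℝ) = 0 := by
        rcases Nat.eq_zero_or_pos t with h0 | h1
        · subst h0
          rw [eval_mul, cheb_eval]
          norm_num [T_one]
        · rw [eval_mul, hqzero t (by omega) ht, mul_zero]
      rw [hz, abs_zero]
      positivity
    · intro x hx
      rw [eval_mul, abs_mul]
      exact mul_le_one₀ (cheb_abs_le_one hn0 le_rfl hx.1 hx.2) (abs_nonneg _) (hqbd x hx)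
  · -- case C : d < 6n
    have hd6 : (d:ℝ) ≤ 6 * n := by
      have : d ≤ 6 * n := le_of_lt hC
      exact_mod_cast this
    obtain ⟨ℓ, hℓdef⟩ : ∃ ℓ : ℕ, ℓ = d^2/(1000*n) + 1 := ⟨_, rfl⟩
    have hℓ1 : 1 ≤ ℓ := by rw [hℓdef]; exact Nat.le_add_left 1 _
    have h1000n : 0 < 1000 * n := by omega
    have hℓlowN : d^2 < ℓ * (1000 * n) := by
      have := Nat.lt_div_mul_add (a := d^2) h1000n
      calc d^2 < d^2/(1000*n)*(1000*n) + 1000*n := this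
        _ = ℓ * (1000*n) := by rw [hℓdef]; ring
    have hℓlow : (d:ℝ)^2 ≤ (ℓ:ℝ) * (1000 * n) := by exact_mod_cast hℓlowN.le
    have hℓup : (ℓ:ℝ) * (1000 * n) ≤ (d:ℝ)^2 + 1000 * n := by
      have h1 : ((d^2/(1000*n) : ℕ) : ℝ) ≤ ((d^2 : ℕ):ℝ) / ((1000*n : ℕ):ℝ) := Nat.cast_div_le
      push_cast at h1
      have h2 : ((ℓ:ℕ):ℝ) = ((d^2/(1000*n) : ℕ) : ℝ) + 1 := by exact_mod_cast hℓdef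
      rw [h2]
      have h3 : ((d^2/(1000*n) : ℕ) : ℝ) * (1000 * n) ≤ ((d:ℝ)^2 / (1000*n)) * (1000*n) := by
        push_cast
        nlinarith [h1]
      have h4 : ((d:ℝ)^2 / (1000*n)) * (1000*n) = (d:ℝ)^2 :=
        div_mul_cancel₀ _ (by positivity)
      nlinarith
    have h2ℓ : 2 * ℓ ≤ n := by
      rcases Nat.lt_or_ge (d^2) (1000*n) with hsmall | hbig
      · have : d^2/(1000*n) = 0 := Nat.div_eq_of_lt hsmall
        omega
      · have hbigR : (1000:ℝ) * n ≤ (d:ℝ)^2 := by exact_mod_cast hbig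
        have hd36 : (d:ℝ)^2 ≤ 36 * (n:ℝ)^2 := by nlinarith
        have hnbig : (25:ℝ) ≤ n := by nlinarith
        have : (2:ℝ) * ℓ ≤ n := by nlinarith
        exact_mod_cast this
    obtain ⟨q, hqdeg, hqN, hqzero, hqbd⟩ := prod_factors n ℓ hn2'
      (le_trans (Nat.le_mul_of_pos_left ℓ (by norm_num)) h2ℓ)
    obtain ⟨S, hSdef⟩ : ∃ S : ℕ, S = ∑ j ∈ Finset.Icc 1 (ℓ - 1), Kdeg n j := ⟨_, rfl⟩
    rw [← hSdef] at hqdeg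
    -- real bound on S
    have hm1 : ((ℓ-1:ℕ):ℝ) ≤ (d:ℝ)^2/(1000*n) := by
      have he : ℓ - 1 = d^2/(1000*n) := by omega
      rw [he]
      have h1 : ((d^2/(1000*n) : ℕ) : ℝ) ≤ ((d^2 : ℕ):ℝ) / ((1000*n : ℕ):ℝ) := Nat.cast_div_le
      push_cast at h1 ⊢
      exact h1
    have hSR : (S:ℝ) ≤ ((ℓ-1:ℕ):ℝ) + 4 * Real.sqrt ((n:ℝ) * ((ℓ-1:ℕ):ℝ)) := by
      rw [hSdef]
      exact_mod_cast sum_Kdeg_le n (ℓ-1) hn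
    have hsqrt : Real.sqrt ((n:ℝ) * ((ℓ-1:ℕ):ℝ)) ≤ (d:ℝ)/31 := by
      have h1 : (n:ℝ) * ((ℓ-1:ℕ):ℝ) ≤ ((d:ℝ)/31)^2 := by
        have h2 : (n:ℝ) * ((d:ℝ)^2/(1000*n)) = (d:ℝ)^2/1000 := by
          field_simp
        nlinarith [hm1, hn0]
      calc Real.sqrt ((n:ℝ) * ((ℓ-1:ℕ):ℝ)) ≤ Real.sqrt (((d:ℝ)/31)^2) := Real.sqrt_le_sqrt h1
        _ = (d:ℝ)/31 := Real.sqrt_sq (by positivity)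
    have hdivn : (d:ℝ)^2/(1000*n) ≤ 6*(d:ℝ)/1000 := by
      rw [div_le_div_iff₀ (by positivity) (by norm_num)]
      nlinarith
    have hSd : (S:ℝ) ≤ (7/50) * d := by nlinarith
    have hSled : S ≤ d := by
      have : (S:ℝ) ≤ (d:ℝ) := by nlinarith
      exact_mod_cast this
    obtain ⟨r, hrdef⟩ : ∃ r : ℕ, r = d - S := ⟨_, rfl⟩
    have hrS : r + S = d := by omega
    have hrR : (r:ℝ) = (d:ℝ) - S := by
      have : ((r + S : ℕ):ℝ) = (d:ℝ) := by exact_mod_cast congrArg (Nat.cast : ℕ → ℝ) hrS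
      push_cast at this
      linarith
    have hrge : (d:ℝ)/2 ≤ r := by rw [hrR]; linarith
    -- scale for main factor
    have hℓn : (ℓ:ℝ) ≤ (n:ℝ)/2 := by
      have : ((2*ℓ:ℕ):ℝ) ≤ n := by exact_mod_cast h2ℓ
      push_cast at this
      linarith
    have ha0 : (0:ℝ) < (n:ℝ) - ℓ := by linarith
    have haN : (n:ℝ) - ℓ ≤ n := by
      have : (0:ℝ) ≤ ℓ := by positivity
      linarith
    refine ⟨cheb r ((n:ℝ) - ℓ) (n:ℝ) * q, ?_, ?_, ?_, ?_⟩
    · refine le_trans natDegree_mul_le ?_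
      calc (cheb r ((n:ℝ) - ℓ) (n:ℝ)).natDegree + q.natDegree ≤ r + S :=
        add_le_add (cheb_natDegree_le _ _ _) hqdeg
        _ = d := hrS
    · rw [eval_mul, hqN, cheb_eval_N ha0 haN, one_mul]
    · intro t ht
      rcases le_or_gt t (n - ℓ) with hlo | hhi
      swap
      · rw [eval_mul, hqzero t hhi ht, mul_zero, abs_zero]
        positivity
      -- main bound
      have htR : (t:ℝ) ≤ (n:ℝ) - ℓ := by
        have h1 : (t:ℝ) ≤ ((n - ℓ:ℕ):ℝ) := by exact_mod_cast hlo
        rwa [Nat.cast_sub (by omega)] at h1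
      have hqt : |q.eval (t:ℝ)| ≤ 1 := by
        apply hqbd
        constructor
        · positivity
        · have : (t:ℝ) ≤ (n:ℝ) := by
            have := le_of_lt ht
            exact_mod_cast this
          exact this
      have hMt : |(cheb r ((n:ℝ) - ℓ) (n:ℝ)).eval (t:ℝ)| ≤
          ((T ℝ r).eval ((n:ℝ)/((n:ℝ) - ℓ)))⁻¹ := by
        apply cheb_abs_le_inv_den ha0 haN
        rw [abs_of_nonneg (by positivity : (0:ℝ) ≤ (t:ℝ))]
        exact htR
      -- lower bound on denominator
      have harg : (n:ℝ)/((n:ℝ) - ℓ) = 1 + (ℓ:ℝ)/((n:ℝ) - ℓ) := by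
        field_simp
        ring
      have hε0 : (0:ℝ) ≤ (ℓ:ℝ)/((n:ℝ) - ℓ) := by positivity
      have hε1 : (ℓ:ℝ)/((n:ℝ) - ℓ) ≤ 1 := by
        rw [div_le_one ha0]
        linarith
      have hden_lb : Real.cosh ((r:ℝ) * Real.sqrt ((ℓ:ℝ)/((n:ℝ) - ℓ))) ≤
          (T ℝ r).eval ((n:ℝ)/((n:ℝ) - ℓ)) := by
        rw [harg]
        exact T_lower r hε0 hε1
      have hE : Real.exp (1/1000 * (d:ℝ)^2 / n) ≤
          Real.cosh ((r:ℝ) * Real.sqrt ((ℓ:ℝ)/((n:ℝ) - ℓ))) := by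
        rcases lt_or_ge ((d:ℝ)^2) (1000 * n) with hsm | hbg
        · -- small case via exp_sq_le_cosh
          have hsn0 : (0:ℝ) < Real.sqrt n := Real.sqrt_pos.2 hn0
          have hsn2 : Real.sqrt (n:ℝ) ^ 2 = n := Real.sq_sqrt hn0.le
          have hw0 : (0:ℝ) ≤ (d:ℝ)/(2 * Real.sqrt n) := by positivity
          have hw16 : (d:ℝ)/(2 * Real.sqrt n) ≤ 16 := by
            rw [div_le_iff₀ (by positivity)]
            nlinarith [Real.sqrt_nonneg (n:ℝ)]
          have h1 := exp_sq_le_cosh hw0 hw16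
          have h2 : ((d:ℝ)/(2 * Real.sqrt n))^2/250 = 1/1000 * (d:ℝ)^2 / n := by
            rw [div_pow, mul_pow, hsn2]
            ring
          rw [h2] at h1
          refine le_trans h1 ?_
          rw [Real.cosh_le_cosh, abs_of_nonneg hw0,
            abs_of_nonneg (by positivity)]
          have hsε : 1/Real.sqrt n ≤ Real.sqrt ((ℓ:ℝ)/((n:ℝ) - ℓ)) := by
            rw [Real.le_sqrt (by positivity) (by positivity), div_pow, hsn2, one_pow,
              div_le_div_iff₀ hn0 ha0]
            have hℓR1 : (1:ℝ) ≤ ℓ := by exact_mod_cast hℓ1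
            nlinarith
          calc (d:ℝ)/(2 * Real.sqrt n) = ((d:ℝ)/2) * (1/Real.sqrt n) := by ring
            _ ≤ (r:ℝ) * Real.sqrt ((ℓ:ℝ)/((n:ℝ) - ℓ)) := by
                apply mul_le_mul hrge hsε (by positivity) (by positivity)
        · -- large case
          have hsε : (d:ℝ)/(32*n) ≤ Real.sqrt ((ℓ:ℝ)/((n:ℝ) - ℓ)) := by
            rw [Real.le_sqrt (by positivity) (by positivity)]
            rw [div_pow, div_le_div_iff₀ (by positivity) ha0]
            nlinarith [hℓlow, hn0, ha0, hdR1]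
          have hu : (d:ℝ)^2/(64*n) ≤ (r:ℝ) * Real.sqrt ((ℓ:ℝ)/((n:ℝ) - ℓ)) := by
            calc (d:ℝ)^2/(64*n) = ((d:ℝ)/2) * ((d:ℝ)/(32*n)) := by ring
              _ ≤ (r:ℝ) * Real.sqrt ((ℓ:ℝ)/((n:ℝ) - ℓ)) :=
                mul_le_mul hrge hsε (by positivity) (by positivity)
          have hu15 : (15:ℝ) ≤ (d:ℝ)^2/(64*n) := by
            rw [le_div_iff₀ (by positivity)]
            nlinarith
          set u := (r:ℝ) * Real.sqrt ((ℓ:ℝ)/((n:ℝ) - ℓ)) with hudef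
          have hEu : 1/1000 * (d:ℝ)^2 / n ≤ u - 1 := by
            have h1 : 1/1000 * (d:ℝ)^2 / n = (64/1000) * ((d:ℝ)^2/(64*n)) := by
              field_simp
            nlinarith
          calc Real.exp (1/1000 * (d:ℝ)^2 / n) ≤ Real.exp (u - 1) := Real.exp_le_exp.2 hEu
            _ ≤ Real.exp u / 2 := by
                rw [Real.exp_sub, div_le_div_iff₀ (Real.exp_pos 1) (by norm_num)]
                have : (2:ℝ) ≤ Real.exp 1 := by
                  have := Real.add_one_le_exp (1:ℝ); linarith
                nlinarith [Real.exp_pos u]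
            _ ≤ Real.cosh u := half_exp_le_cosh u
      -- combine
      have hden_pos : (0:ℝ) < (T ℝ r).eval ((n:ℝ)/((n:ℝ) - ℓ)) := by
        have := cheb_den_ge (k := r) ha0 haN
        linarith
      have hfin : ((T ℝ r).eval ((n:ℝ)/((n:ℝ) - ℓ)))⁻¹ ≤ Real.exp (-(1/1000) * (d:ℝ)^2 / n) := by
        have h1 : Real.exp (1/1000 * (d:ℝ)^2 / n) ≤ (T ℝ r).eval ((n:ℝ)/((n:ℝ) - ℓ)) :=
          le_trans hE hden_lb
        have h2 : -(1/1000) * (d:ℝ)^2 / n = -(1/1000 * (d:ℝ)^2 / n) := by ring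
        rw [h2, Real.exp_neg]
        exact inv_anti₀ (Real.exp_pos _) h1
      calc |(cheb r ((n:ℝ) - ℓ) (n:ℝ) * q).eval (t:ℝ)|
          = |(cheb r ((n:ℝ) - ℓ) (n:ℝ)).eval (t:ℝ)| * |q.eval (t:ℝ)| := by
            rw [eval_mul, abs_mul]
        _ ≤ ((T ℝ r).eval ((n:ℝ)/((n:ℝ) - ℓ)))⁻¹ * 1 :=
            mul_le_mul hMt hqt (abs_nonneg _) (by positivity)
        _ = ((T ℝ r).eval ((n:ℝ)/((n:ℝ) - ℓ)))⁻¹ := mul_one _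
        _ ≤ Real.exp (-(1/1000) * (d:ℝ)^2 / n) := hfin
    · intro x hx
      rw [eval_mul, abs_mul]
      exact mul_le_one₀ (cheb_abs_le_one ha0 haN hx.1 hx.2) (abs_nonneg _) (hqbd x hx)
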